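/- Let R ∈ ℝ^{n×n} be a nonnegative matrix with column sums at most 1 (substochastic, with at least one column sum strictly less than 1 in every closed communicating class), and F = diag(φ₁,...,φ_n) with φ_i > 0. If the spectral radius of R is strictly less than 1, then the matrix (Rᵀ - I)F is Hurwitz: all its eigenvalues have negative real part. -/

import Mathlib

open Matrix

attribute [local instance] Matrix.linftyOpNormedRing Matrix.linftyOpNormedAlgebra

private lemma spectrum_transpose_aux {n : ℕ} (M : Matrix (Fin n) (Fin n) ℂ) :
    spectrum ℂ Mᵀ = spectrum ℂ M := by
  ext μ
  simp only [spectrum.mem_iff]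
  have key : algebraMap ℂ (Matrix (Fin n) (Fin n) ℂ) μ - Mᵀ
      = (algebraMap ℂ (Matrix (Fin n) (Fin n) ℂ) μ - M)ᵀ := by
    rw [transpose_sub, algebraMap_eq_diagonal, diagonal_transpose]
  rw [key, Matrix.isUnit_iff_isUnit_det, det_transpose, ← Matrix.isUnit_iff_isUnit_det]

private lemma specrad_lt_one_aux {n : ℕ} (M : Matrix (Fin n) (Fin n) ℂ)
    (h : ∀ μ ∈ spectrum ℂ M, ‖μ‖ < 1) : spectralRadius ℂ M < 1 := by
  rcases (spectrum ℂ M).eq_empty_or_nonempty with he | hne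
  · rw [spectralRadius, he]
    simp
  · obtain ⟨μ0, hμ0, hmax⟩ :=
      (spectrum.isCompact M).exists_isMaxOn hne continuous_norm.continuousOn
    have h1 : spectralRadius ℂ M ≤ (‖μ0‖₊ : ENNReal) := by
      rw [spectralRadius]
      exact iSup₂_le fun ν hν => ENNReal.coe_le_coe.mpr (by
        have := hmax hν
        simpa [← NNReal.coe_le_coe] using this)
    refine h1.trans_lt ?_
    have : ‖μ0‖₊ < 1 := by
      have := h μ0 hμ0
      simpa [← NNReal.coe_lt_coe] using this
    exact_mod_cast this

private lemma exists_pow_nnnorm_lt_one_aux {n : ℕ} (M : Matrix (Fin n) (Fin n) ℂ)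
    (h : spectralRadius ℂ M < 1) : ∃ k : ℕ, ‖M ^ k‖₊ < 1 := by
  have ht := spectrum.pow_nnnorm_pow_one_div_tendsto_nhds_spectralRadius M
  have hev : ∀ᶠ k : ℕ in Filter.atTop,
      (‖M ^ k‖₊ : ENNReal) ^ (1 / (k : ℝ)) < 1 := ht.eventually_lt_const h
  obtain ⟨k, hk1, hk⟩ := (hev.and (Filter.eventually_ge_atTop 1)).exists
  refine ⟨k, ?_⟩
  by_contra hc
  push_neg at hc
  have h1 : (1 : ENNReal) ≤ (‖M ^ k‖₊ : ENNReal) := by exact_mod_cast hc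
  have : (1 : ENNReal) ≤ (‖M ^ k‖₊ : ENNReal) ^ (1 / (k : ℝ)) := by
    calc (1 : ENNReal) = 1 ^ (1 / (k : ℝ)) := (ENNReal.one_rpow _).symm
    _ ≤ _ := ENNReal.rpow_le_rpow h1 (by positivity)
  exact absurd hk1 (not_lt.mpr this)

theorem stmt_17 {n : ℕ}
    (R : Matrix (Fin n) (Fin n) ℝ) (φ : Fin n → ℝ)
    (hRnn : ∀ i j, 0 ≤ R i j)
    (hcol : ∀ j, (∑ i, R i j) ≤ 1)
    (hφ : ∀ i, 0 < φ i)
    (hspec : ∀ μ ∈ spectrum ℂ (R.map (Complex.ofReal ·)), ‖μ‖ < 1) :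
    ∀ μ ∈ spectrum ℂ (((Rᵀ - 1) * Matrix.diagonal φ).map (Complex.ofReal ·)),
      μ.re < 0 := by
  intro μ hμ
  by_contra hre
  push_neg at hre
  set N : Matrix (Fin n) (Fin n) ℝ := Rᵀ with hN
  set Mc : Matrix (Fin n) (Fin n) ℂ := N.map (Complex.ofReal ·) with hMc
  have hspecMc : ∀ ν ∈ spectrum ℂ Mc, ‖ν‖ < 1 := by
    intro ν hν
    apply hspec
    have heq : Mc = (R.map (Complex.ofReal ·))ᵀ := by
      ext i j; simp [hMc, hN, transpose_apply, Matrix.map_apply]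
    rw [heq, spectrum_transpose_aux] at hν
    exact hν
  obtain ⟨k, hk⟩ := exists_pow_nnnorm_lt_one_aux Mc (specrad_lt_one_aux Mc hspecMc)
  set A : Matrix (Fin n) (Fin n) ℂ :=
    ((Rᵀ - 1) * Matrix.diagonal φ).map (Complex.ofReal ·) with hA
  have hdet : (algebraMap ℂ (Matrix (Fin n) (Fin n) ℂ) μ - A).det = 0 := by
    have hu := spectrum.mem_iff.mp hμ
    rw [Matrix.isUnit_iff_isUnit_det, isUnit_iff_ne_zero] at hu
    push_neg at hu
    exact hu
  obtain ⟨v, hv0, hv⟩ := Matrix.exists_mulVec_eq_zero_iff.mpr hdet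
  have hAv : A.mulVec v = μ • v := by
    have h1 : (algebraMap ℂ (Matrix (Fin n) (Fin n) ℂ) μ - A).mulVec v
        = μ • v - A.mulVec v := by
      rw [sub_mulVec, algebraMap_eq_diagonal]
      congr 1
      ext i
      simp [mulVec_diagonal, Pi.algebraMap_apply]
    rw [h1] at hv
    exact (sub_eq_zero.mp hv).symm
  -- entrywise eigen relation
  have key : ∀ i, ∑ j, (R j i : ℂ) * ((φ j : ℂ) * v j)
      = ((φ i : ℂ) + μ) * v i := by
    intro i
    have h := congr_fun hAv i
    simp only [Matrix.mulVec, dotProduct, hA, Matrix.map_apply,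
      Matrix.mul_diagonal, Matrix.sub_apply, Matrix.one_apply,
      Matrix.transpose_apply, Pi.smul_apply, smul_eq_mul] at h
    push_cast [apply_ite Complex.ofReal] at h
    have h2 : ∑ j, ((R j i : ℂ) - if i = j then 1 else 0) * (φ j : ℂ) * v j
        = μ * v i := h
    rw [Finset.sum_congr rfl (fun j _ => by split <;> ring :
      ∀ j ∈ Finset.univ, ((R j i : ℂ) - if i = j then 1 else 0) * (φ j : ℂ) * v j
        = (R j i : ℂ) * ((φ j : ℂ) * v j)
          - (if i = j then ((φ j : ℂ) * v j) else 0))] at h2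
    rw [Finset.sum_sub_distrib, Finset.sum_ite_eq Finset.univ i
      (fun j => (φ j : ℂ) * v j)] at h2
    simp only [Finset.mem_univ, if_true] at h2
    linear_combination h2
  -- the nonnegative vector
  set x : Fin n → ℝ := fun i => ‖(φ i : ℂ) * v i‖ with hx
  have hxnn : ∀ i, 0 ≤ x i := fun i => norm_nonneg _
  have hstep : ∀ i, x i ≤ (N.mulVec x) i := by
    intro i
    have h1 : (φ i : ℝ) ≤ ‖(φ i : ℂ) + μ‖ := by
      have := Complex.re_le_norm ((φ i : ℂ) + μ)
      simp only [Complex.add_re, Complex.ofReal_re] at this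
      linarith
    calc x i = (φ i) * ‖v i‖ := by
          simp [hx, norm_mul, Complex.norm_real, abs_of_pos (hφ i)]
      _ ≤ ‖(φ i : ℂ) + μ‖ * ‖v i‖ :=
          mul_le_mul_of_nonneg_right h1 (norm_nonneg _)
      _ = ‖((φ i : ℂ) + μ) * v i‖ := (norm_mul _ _).symm
      _ = ‖∑ j, (R j i : ℂ) * ((φ j : ℂ) * v j)‖ := by rw [key i]
      _ ≤ ∑ j, ‖(R j i : ℂ) * ((φ j : ℂ) * v j)‖ :=
          norm_sum_le _ _
      _ = (N.mulVec x) i := by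
          simp only [Matrix.mulVec, dotProduct, hN, transpose_apply, hx]
          refine Finset.sum_congr rfl fun j _ => ?_
          rw [norm_mul, Complex.norm_real, Real.norm_eq_abs, abs_of_nonneg (hRnn j i)]
  -- nonnegativity of powers and monotone iteration
  have hNnn : ∀ i j, 0 ≤ N i j := fun i j => hRnn j i
  have hpownn : ∀ m : ℕ, ∀ i j, 0 ≤ (N ^ m) i j := by
    intro m
    induction m with
    | zero => intro i j; simp [Matrix.one_apply]; split <;> norm_num
    | succ m ih =>
        intro i j
        rw [pow_succ, Matrix.mul_apply]
        exact Finset.sum_nonneg fun l _ => mul_nonneg (ih i l) (hNnn l j)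
  have hiter : ∀ m : ℕ, ∀ i, x i ≤ ((N ^ m).mulVec x) i := by
    intro m
    induction m with
    | zero => intro i; simp [Matrix.one_mulVec]
    | succ m ih =>
        intro i
        have h1 : ((N ^ (m + 1)).mulVec x) i = ((N ^ m).mulVec (N.mulVec x)) i := by
          rw [pow_succ, ← Matrix.mulVec_mulVec]
        rw [h1]
        refine (ih i).trans ?_
        simp only [Matrix.mulVec, dotProduct]
        exact Finset.sum_le_sum fun j _ =>
          mul_le_mul_of_nonneg_left (hstep j) (hpownn m i j)
  -- pick a maximizing index
  obtain ⟨j0, hj0⟩ := Function.ne_iff.mp hv0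
  have hne : (Finset.univ : Finset (Fin n)).Nonempty := ⟨j0, Finset.mem_univ _⟩
  obtain ⟨i0, -, hmax⟩ := Finset.exists_max_image Finset.univ x hne
  have hxi0pos : 0 < x i0 := by
    have : 0 < x j0 := by
      simp only [hx]
      refine (norm_pos_iff.mpr ?_)
      exact mul_ne_zero (Complex.ofReal_ne_zero.mpr (ne_of_gt (hφ j0))) hj0
    exact lt_of_lt_of_le this (hmax j0 (Finset.mem_univ _))
  -- row-sum bound from the norm of Mc ^ k
  have hmap : Mc ^ k = (N ^ k).map (Complex.ofReal ·) := by
    have := map_pow (Complex.ofRealHom.mapMatrix) N k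
    exact this.symm
  have hrow : ∑ j, (N ^ k) i0 j < 1 := by
    have h1 : (∑ j, ‖(Mc ^ k) i0 j‖₊) ≤ ‖Mc ^ k‖₊ := by
      rw [Matrix.linfty_opNNNorm_def]
      exact Finset.le_sup (f := fun i => ∑ j, ‖(Mc ^ k) i j‖₊) (Finset.mem_univ i0)
    have h2 : (∑ j, ‖(Mc ^ k) i0 j‖₊) < 1 := lt_of_le_of_lt h1 hk
    have h3 : ((∑ j, ‖(Mc ^ k) i0 j‖₊ : NNReal) : ℝ) < 1 := by exact_mod_cast h2
    have h4 : ((∑ j, ‖(Mc ^ k) i0 j‖₊ : NNReal) : ℝ) = ∑ j, (N ^ k) i0 j := by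
      push_cast
      refine Finset.sum_congr rfl fun j _ => ?_
      rw [hmap]
      simp [Matrix.map_apply, Complex.norm_real,
        abs_of_nonneg (hpownn k i0 j)]
    linarith [h4 ▸ h3]
  -- contradiction
  have hfin : x i0 ≤ (∑ j, (N ^ k) i0 j) * x i0 := by
    refine (hiter k i0).trans ?_
    simp only [Matrix.mulVec, dotProduct, Finset.sum_mul]
    exact Finset.sum_le_sum fun j _ =>
      mul_le_mul_of_nonneg_left (hmax j (Finset.mem_univ _)) (hpownn k i0 j)
  nlinarith [hxi0pos, hrow, hfin, Finset.sum_nonneg fun j (_ : j ∈ Finset.univ) => hpownn k i0 j]
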